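/- The Lobachevsky function satisfies Л(ω) = (1/2) Im(Li₂(e^{2iω})) for all real ω, where Li₂(z) = Σ_{r≥1} z^r/r² is the dilogarithm. -/

import Mathlib

open Real

/-- The Lobachevsky function Л(θ) = -∫₀^θ log|2 sin t| dt. -/
noncomputable def lob (θ : ℝ) : ℝ := -∫ t in (0 : ℝ)..θ, Real.log |2 * Real.sin t|

/-- The dilogarithm Li₂(z) = Σ_{r≥1} z^r / r². -/
noncomputable def dilog (z : ℂ) : ℂ := ∑' r : ℕ, z ^ (r + 1) / ((r : ℂ) + 1) ^ 2

open MeasureTheory Filter Set Topology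

lemma integrableOn_log_abs_Ioc : IntegrableOn (fun t : ℝ => Real.log |t|) (Set.Ioc (-1 : ℝ) 1) volume := by
  have h1 : IntegrableOn (fun t : ℝ => -Real.log t) (Set.Ioc (0:ℝ) 1) volume := by
    apply intervalIntegral.integrableOn_deriv_of_nonneg (g := fun t => t - t * Real.log t)
    · exact (continuous_id.sub Real.continuous_mul_log).continuousOn
    · intro x hx
      have h := Real.hasDerivAt_mul_log (ne_of_gt hx.1)
      exact ((hasDerivAt_id' x).sub h).congr_deriv (by show _ = -Real.log x; ring)
    · intro x hx
      simp only [neg_nonneg]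
      exact Real.log_nonpos hx.1.le hx.2.le
  have h2 : IntegrableOn (fun t : ℝ => -Real.log (-t)) (Set.Ioc (-1:ℝ) 0) volume := by
    apply intervalIntegral.integrableOn_deriv_of_nonneg (g := fun t => t + (-t) * Real.log (-t))
    · exact (continuous_id.add (Real.continuous_mul_log.comp continuous_neg)).continuousOn
    · intro x hx
      have h : HasDerivAt (fun t : ℝ => (-t) * Real.log (-t)) ((Real.log (-x) + 1) * (-1)) x := by
        exact (Real.hasDerivAt_mul_log (by simp; linarith [hx.2])).comp x (hasDerivAt_neg x)
      have := (hasDerivAt_id' x).add h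
      exact this.congr_deriv (by show _ = -Real.log (-x); ring)
    · intro x hx
      simp only [neg_nonneg]
      exact Real.log_nonpos (by linarith [hx.2]) (by linarith [hx.1])
  have e1 : IntegrableOn (fun t : ℝ => Real.log |t|) (Set.Ioc (0:ℝ) 1) volume := by
    refine MeasureTheory.IntegrableOn.congr_fun h1.neg (fun t ht => ?_) measurableSet_Ioc
    simp [abs_of_pos ht.1]
  have e2 : IntegrableOn (fun t : ℝ => Real.log |t|) (Set.Ioc (-1:ℝ) 0) volume := by
    refine MeasureTheory.IntegrableOn.congr_fun h2.neg (fun t ht => ?_) measurableSet_Ioc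
    rcases eq_or_lt_of_le ht.2 with rfl | h
    · simp
    · simp [abs_of_neg h]
  have := e2.union e1
  refine this.mono_set fun t ht => ?_
  rcases le_or_gt t 0 with h | h
  · exact Or.inl ⟨ht.1, h⟩
  · exact Or.inr ⟨h, ht.2⟩

lemma locallyIntegrable_log_abs : LocallyIntegrable (fun t : ℝ => Real.log |t|) volume := by
  intro x
  rcases eq_or_ne x 0 with rfl | hx
  · exact ⟨Set.Ioc (-1) 1, mem_of_superset (Ioo_mem_nhds (by norm_num) (by norm_num))
      Ioo_subset_Ioc_self, integrableOn_log_abs_Ioc⟩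
  · have hne : ∀ t ∈ Set.Icc (x - |x|/2) (x + |x|/2), t ≠ 0 := by
      intro t ht
      intro h0
      subst h0
      rcases lt_or_gt_of_ne hx with h | h
      · have h1 : |x| = -x := abs_of_neg h
        have := ht.2; linarith
      · have h1 : |x| = x := abs_of_pos h
        have := ht.1; linarith
    have hc : ContinuousOn (fun t : ℝ => Real.log |t|) (Set.Icc (x - |x|/2) (x + |x|/2)) := by
      intro t ht
      exact ((Real.continuousAt_log (abs_ne_zero.mpr (hne t ht))).comp
        continuous_abs.continuousAt).continuousWithinAt
    refine ⟨Set.Icc (x - |x|/2) (x + |x|/2),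
      Icc_mem_nhds (by have := abs_pos.mpr hx; linarith) (by have := abs_pos.mpr hx; linarith), ?_⟩
    exact hc.integrableOn_Icc

lemma intervalIntegrable_log_abs (a b : ℝ) :
    IntervalIntegrable (fun t : ℝ => Real.log |t|) volume a b := by
  rw [intervalIntegrable_iff]
  exact (locallyIntegrable_log_abs.integrableOn_isCompact isCompact_uIcc).mono_set
    Set.uIoc_subset_uIcc

lemma sin_ne_zero_ae : ∀ᵐ t : ℝ, Real.sin t ≠ 0 := by
  have hc : Set.Countable {t : ℝ | Real.sin t = 0} := by
    have : {t : ℝ | Real.sin t = 0} ⊆ Set.range (fun n : ℤ => (n : ℝ) * π) := by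
      intro t ht
      rcases Real.sin_eq_zero_iff.mp ht with ⟨n, hn⟩
      exact ⟨n, hn⟩
    exact (Set.countable_range _).mono this
  rw [ae_iff]
  simpa only [ne_eq, not_not] using hc.measure_zero volume

lemma locallyIntegrable_log_abs_sin :
    LocallyIntegrable (fun t : ℝ => Real.log |Real.sin t|) volume := by
  intro x
  rcases eq_or_ne (Real.sin x) 0 with hx | hx
  · -- x = k π
    obtain ⟨k, hk⟩ := Real.sin_eq_zero_iff.mp hx
    -- dominating function
    have hg : IntervalIntegrable (fun t : ℝ => Real.log (π/2) - Real.log |t - x|) volume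
        (x - 1) (x + 1) := by
      apply IntervalIntegrable.sub intervalIntegrable_const
      have := (intervalIntegrable_log_abs (-1) 1).comp_sub_right x
      simpa [neg_add_eq_sub, sub_eq_add_neg, add_comm] using this
    have hgOn : IntegrableOn (fun t : ℝ => Real.log (π/2) - Real.log |t - x|)
        (Set.Icc (x - 1) (x + 1)) volume := by
      rw [intervalIntegrable_iff_integrableOn_Icc_of_le (by linarith)] at hg
      exact hg
    refine ⟨Set.Icc (x - 1) (x + 1), Icc_mem_nhds (by linarith) (by linarith), ?_⟩
    apply Integrable.mono' hgOn
    · exact ((Real.measurable_log.comp (measurable_abs.comp Real.measurable_sin))).aestronglyMeasurable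
    · rw [ae_restrict_iff' measurableSet_Icc]
      refine ae_of_all _ fun t ht => ?_
      rcases eq_or_ne t x with rfl | htx
      · simp [hx]
        have : (0:ℝ) < Real.log (π/2) := Real.log_pos (by linarith [Real.pi_gt_three])
        linarith
      · -- |sin t| = |sin (t - x)| ≥ (2/π)|t - x|
        have habs : |Real.sin t| = |Real.sin (t - x)| := by
          have h1 : Real.sin t = (-1 : ℝ) ^ k * Real.sin (t - x) := by
            conv_lhs => rw [show t = (t - x) + (k : ℝ) * π by rw [← hk]; ring]
            rw [Real.sin_add_int_mul_pi]
          rw [h1, abs_mul]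
          rcases Int.even_or_odd k with he | ho
          · rw [he.neg_one_zpow]; simp
          · rw [ho.neg_one_zpow]; simp
        have hu0 : t - x ≠ 0 := sub_ne_zero.mpr htx
        have hu1 : |t - x| ≤ 1 := by
          rw [abs_le]; constructor <;> [linarith [ht.1]; linarith [ht.2]]
        have hpi2 : (1 : ℝ) ≤ π / 2 := by linarith [Real.pi_gt_three]
        have hlow : 2 / π * |t - x| ≤ |Real.sin t| := by
          rw [habs]
          exact Real.mul_abs_le_abs_sin (le_trans hu1 hpi2)
        have hupos : 0 < |t - x| := abs_pos.mpr hu0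
        have hmulpos : 0 < 2 / π * |t - x| := by
          have := Real.pi_pos; positivity
        have hloglow : Real.log (2 / π) + Real.log |t - x| ≤ Real.log |Real.sin t| := by
          rw [← Real.log_mul (by positivity) hupos.ne']
          exact Real.log_le_log hmulpos hlow
        have hlogup : Real.log |Real.sin t| ≤ 0 :=
          Real.log_nonpos (abs_nonneg _) (abs_le.mpr ⟨Real.neg_one_le_sin t, Real.sin_le_one t⟩)
        have hflip : Real.log (2 / π) = -Real.log (π / 2) := by
          rw [← Real.log_inv]
          norm_num
        have hlogpi : 0 < Real.log (π / 2) := Real.log_pos (by linarith [Real.pi_gt_three])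
        rw [Real.norm_eq_abs, abs_le]
        constructor
        · rw [hflip] at hloglow; linarith
        · linarith
  · -- sin x ≠ 0 : continuous near x
    have hopen : IsOpen {t : ℝ | Real.sin t ≠ 0} := isOpen_ne.preimage Real.continuous_sin
    obtain ⟨ε, hε, hball⟩ := Metric.isOpen_iff.mp hopen x hx
    have hsub : Set.Icc (x - ε/2) (x + ε/2) ⊆ {t : ℝ | Real.sin t ≠ 0} := by
      intro t ht
      apply hball
      rw [Metric.mem_ball, Real.dist_eq, abs_sub_lt_iff]
      constructor <;> [linarith [ht.2]; linarith [ht.1]]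
    have hc : ContinuousOn (fun t : ℝ => Real.log |Real.sin t|) (Set.Icc (x - ε/2) (x + ε/2)) := by
      intro t ht
      exact ((Real.continuous_sin.abs.continuousAt).log (abs_ne_zero.mpr (hsub ht))).continuousWithinAt
    exact ⟨Set.Icc (x - ε/2) (x + ε/2), Icc_mem_nhds (by linarith) (by linarith),
      hc.integrableOn_Icc⟩

lemma intervalIntegrable_log_abs_sin (a b : ℝ) :
    IntervalIntegrable (fun t : ℝ => Real.log |Real.sin t|) volume a b := by
  rw [intervalIntegrable_iff]
  exact (locallyIntegrable_log_abs_sin.integrableOn_isCompact isCompact_uIcc).mono_set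
    Set.uIoc_subset_uIcc

lemma normSq_one_sub_mul_exp (x t : ℝ) :
    Complex.normSq (1 - (x : ℂ) * Complex.exp (2 * Complex.I * t)) =
      1 - 2 * x * Real.cos (2 * t) + x ^ 2 := by
  have h : (2 * Complex.I * (t : ℂ)) = ((2 * t : ℝ) : ℂ) * Complex.I := by push_cast; ring
  rw [h, Complex.exp_mul_I, ← Complex.ofReal_cos, ← Complex.ofReal_sin]
  simp only [Complex.normSq_apply, Complex.sub_re, Complex.sub_im, Complex.one_re, Complex.one_im,
    Complex.mul_re, Complex.mul_im, Complex.add_re, Complex.add_im, Complex.ofReal_re,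
    Complex.ofReal_im, Complex.I_re, Complex.I_im]
  ring_nf
  nlinarith [Real.sin_sq_add_cos_sq (t * 2)]

lemma abs_one_sub_exp (t : ℝ) :
    ‖1 - Complex.exp (2 * Complex.I * t)‖ = 2 * |Real.sin t| := by
  have h := normSq_one_sub_mul_exp 1 t
  rw [Complex.ofReal_one, one_mul] at h
  rw [Complex.norm_def, h]
  have h2 : 1 - 2 * 1 * Real.cos (2 * t) + 1 ^ 2 = (2 * |Real.sin t|) ^ 2 := by
    have := Real.cos_two_mul t
    have := Real.sin_sq_add_cos_sq t
    have := sq_abs (Real.sin t)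
    nlinarith
  rw [h2, Real.sqrt_sq (by positivity)]

lemma abs_one_sub_mul_exp_le (x t : ℝ) (hx0 : 0 ≤ x) (hx1 : x ≤ 1) :
    ‖1 - (x : ℂ) * Complex.exp (2 * Complex.I * t)‖ ≤ 2 := by
  calc ‖1 - (x : ℂ) * Complex.exp (2 * Complex.I * t)‖
      = ‖(1 : ℂ) - (x : ℂ) * Complex.exp (2 * Complex.I * t)‖ := rfl
    _ ≤ ‖(1 : ℂ)‖ + ‖(x : ℂ) * Complex.exp (2 * Complex.I * t)‖ := norm_sub_le _ _
    _ ≤ 2 := by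
        rw [norm_one, norm_mul, Complex.norm_exp]
        have : (2 * Complex.I * (t:ℂ)).re = 0 := by simp
        rw [this, Real.exp_zero, mul_one, Complex.norm_real, Real.norm_eq_abs, abs_of_nonneg hx0]
        linarith

lemma abs_sin_le_abs_one_sub_mul_exp {x : ℝ} (t : ℝ) (hx0 : 1/2 ≤ x) (hx1 : x ≤ 1) :
    |Real.sin t| ≤ ‖1 - (x : ℂ) * Complex.exp (2 * Complex.I * t)‖ := by
  rw [Complex.norm_def, normSq_one_sub_mul_exp]
  rw [show |Real.sin t| = Real.sqrt (Real.sin t ^ 2) by rw [Real.sqrt_sq_eq_abs]]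
  apply Real.sqrt_le_sqrt
  have hc := Real.cos_two_mul t
  have hs := Real.sin_sq_add_cos_sq t
  nlinarith

lemma summable_dilog {w : ℂ} (hw : ‖w‖ ≤ 1) :
    Summable (fun r : ℕ => w ^ (r + 1) / ((r : ℂ) + 1) ^ 2) := by
  apply Summable.of_norm_bounded (g := fun r : ℕ => 1 / ((r : ℝ) + 1) ^ 2)
  · have h : Summable (fun n : ℕ => 1 / (n : ℝ) ^ 2) := by
      simpa using Real.summable_one_div_nat_pow.mpr one_lt_two
    have := (summable_nat_add_iff (f := fun n : ℕ => 1 / (n : ℝ) ^ 2) 1).mpr h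
    refine this.congr fun r => ?_
    push_cast
    ring
  · intro r
    rw [norm_div, norm_pow, norm_pow]
    have h1 : ‖(r : ℂ) + 1‖ = (r : ℝ) + 1 := by
      rw [show (r : ℂ) + 1 = ((r + 1 : ℕ) : ℂ) by push_cast; ring, Complex.norm_natCast]
      push_cast; ring
    rw [h1]
    gcongr
    exact pow_le_one₀ (norm_nonneg w) hw

lemma hasSum_dilog {w : ℂ} (hw : ‖w‖ ≤ 1) :
    HasSum (fun r : ℕ => w ^ (r + 1) / ((r : ℂ) + 1) ^ 2) (dilog w) :=
  (summable_dilog hw).hasSum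

lemma dilog_ofReal_im {x : ℝ} (hx : |x| ≤ 1) : (dilog (x : ℂ)).im = 0 := by
  have hs := summable_dilog (w := (x : ℂ)) (by rwa [Complex.norm_real, Real.norm_eq_abs])
  rw [dilog]
  have hmap := Complex.imCLM.map_tsum hs
  simp only [Complex.imCLM_apply] at hmap
  rw [hmap]
  have h0 : ∀ r : ℕ, ((x : ℂ) ^ (r + 1) / ((r : ℂ) + 1) ^ 2).im = 0 := by
    intro r
    have : ((x : ℂ) ^ (r + 1) / ((r : ℂ) + 1) ^ 2) = ((x ^ (r+1) / ((r:ℝ)+1)^2 : ℝ) : ℂ) := by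
      push_cast; ring
    rw [this]
    exact Complex.ofReal_im _
  simp only [h0]
  exact tsum_zero

lemma abs_z (x t : ℝ) (hx0 : 0 ≤ x) :
    ‖(x : ℂ) * Complex.exp (2 * Complex.I * t)‖ = x := by
  rw [norm_mul, Complex.norm_exp, Complex.norm_real, Real.norm_eq_abs, abs_of_nonneg hx0]
  have : (2 * Complex.I * (t : ℂ)).re = 0 := by simp
  rw [this, Real.exp_zero, mul_one]

lemma key_identity (ω : ℝ) {x : ℝ} (hx0 : 0 ≤ x) (hx1 : x < 1) :
    (∫ t in (0:ℝ)..ω, -Real.log (‖1 - (x:ℂ) * Complex.exp (2*Complex.I*t)‖)) =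
      (dilog ((x:ℂ) * Complex.exp (2*Complex.I*ω))).im / 2 := by
  set z : ℝ → ℂ := fun t => (x:ℂ) * Complex.exp (2*Complex.I*t) with hz
  have habs : ∀ t : ℝ, ‖z t‖ = x := fun t => abs_z x t hx0
  have hnorm : ∀ t : ℝ, ‖z t‖ < 1 := fun t => by
    rw [habs]; exact hx1
  have hzc : Continuous z := by
    exact continuous_const.mul (Complex.continuous_exp.comp
      (continuous_const.mul Complex.continuous_ofReal))
  set F : ℕ → C(ℝ, ℂ) := fun n => ⟨fun t => (z t) ^ n / n, by
    exact ((hzc.pow n).div_const _)⟩ with hF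
  -- termwise sum of integrals
  have hHasSum : HasSum (fun n : ℕ => ∫ t in (0:ℝ)..ω, (F n) t)
      (∫ t in (0:ℝ)..ω, ∑' n : ℕ, (F n) t) := by
    apply intervalIntegral.hasSum_intervalIntegral_of_summable_norm
    apply Summable.of_nonneg_of_le (fun n => norm_nonneg _) ?_
      (summable_geometric_of_lt_one hx0 hx1)
    intro n
    rw [ContinuousMap.norm_le _ (pow_nonneg hx0 n)]
    rintro ⟨t, ht⟩
    simp only [ContinuousMap.restrict_apply, hF, ContinuousMap.coe_mk]
    rcases Nat.eq_zero_or_pos n with rfl | hn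
    · simp
    · rw [norm_div, norm_pow, habs, Complex.norm_natCast]
      exact div_le_self (pow_nonneg hx0 n) (by exact_mod_cast hn)
  -- identify the integrand sum with -log
  have htsum : (fun t : ℝ => ∑' n : ℕ, (F n) t) = fun t => -Complex.log (1 - z t) := by
    funext t
    have h := Complex.hasSum_taylorSeries_neg_log (hnorm t)
    exact h.tsum_eq
  rw [intervalIntegral.integral_congr (fun t _ => congrFun htsum t)] at hHasSum
  -- compute each term's integral
  have hterm : ∀ n : ℕ, (∫ t in (0:ℝ)..ω, (F n) t) =
      (((x:ℂ) * Complex.exp (2*Complex.I*ω)) ^ n - (x:ℂ) ^ n) / (2 * Complex.I * (n:ℂ) ^ 2) := by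
    intro n
    rcases Nat.eq_zero_or_pos n with rfl | hn
    · simp [hF]
    · have hn0 : (n : ℂ) ≠ 0 := by exact_mod_cast hn.ne'
      have hc : (2 * (n:ℂ) * Complex.I) ≠ 0 := by
        simp only [ne_eq, mul_eq_zero, Complex.I_ne_zero, or_false, not_or]
        norm_num
        exact_mod_cast hn.ne'
      have hint : ∀ t : ℝ, (F n) t = (x:ℂ)^n / n * Complex.exp ((2 * (n:ℂ) * Complex.I) * t) := by
        intro t
        simp only [hF, ContinuousMap.coe_mk, hz]
        rw [mul_pow, ← Complex.exp_nat_mul]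
        ring_nf
      rw [intervalIntegral.integral_congr (fun t _ => hint t),
        intervalIntegral.integral_const_mul, integral_exp_mul_complex hc]
      have h0 : Complex.exp (2 * (n:ℂ) * Complex.I * ((0:ℝ):ℂ)) = 1 := by
        norm_num
      rw [h0, mul_pow, ← Complex.exp_nat_mul]
      have harg : (n : ℂ) * (2 * Complex.I * (ω:ℂ)) = 2 * (n:ℂ) * Complex.I * (ω:ℂ) := by ring
      rw [harg]
      field_simp
  simp only [hterm] at hHasSum
  -- the dilog side
  set w1 : ℂ := (x:ℂ) * Complex.exp (2*Complex.I*ω) with hw1def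
  have hw1 : ‖w1‖ ≤ 1 := by rw [hw1def]; rw [abs_z x ω hx0]; exact hx1.le
  have hw2 : ‖(x:ℂ)‖ ≤ 1 := by
    rw [Complex.norm_real, Real.norm_eq_abs, abs_of_nonneg hx0]; exact hx1.le
  have hsub := ((hasSum_dilog hw1).sub (hasSum_dilog hw2)).div_const (2*Complex.I)
  set g : ℕ → ℂ := fun n => (w1 ^ n - (x:ℂ) ^ n) / (2 * Complex.I * (n:ℂ) ^ 2) with hg
  have hshape : (fun r : ℕ =>
      (w1 ^ (r+1) / ((r:ℂ)+1)^2 - (x:ℂ)^(r+1) / ((r:ℂ)+1)^2) / (2*Complex.I)) =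
      fun r : ℕ => g (r + 1) := by
    funext r
    simp only [hg]
    push_cast
    rw [div_sub_div_same, div_div, mul_comm]
  rw [hshape] at hsub
  have hfull : HasSum g ((dilog w1 - dilog (x:ℂ)) / (2*Complex.I)) := by
    have := (hasSum_nat_add_iff (f := g) 1).mp hsub
    simpa [hg] using this
  have hcomplex : (∫ t in (0:ℝ)..ω, -Complex.log (1 - z t)) =
      (dilog w1 - dilog (x:ℂ)) / (2*Complex.I) := hHasSum.unique hfull
  -- take real parts
  have hcont : Continuous fun t : ℝ => -Complex.log (1 - z t) := by
    apply Continuous.neg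
    rw [continuous_iff_continuousAt]
    intro t
    have h1 : ContinuousAt (fun u : ℝ => 1 - z u) t := (continuous_const.sub hzc).continuousAt
    have h2 : (1 - z t) ∈ Complex.slitPlane := by
      rw [Complex.mem_slitPlane_iff]
      left
      have hre : (z t).re ≤ x := by
        calc (z t).re ≤ |(z t).re| := le_abs_self _
          _ ≤ ‖z t‖ := Complex.abs_re_le_norm _
          _ = x := habs t
      simp only [Complex.sub_re, Complex.one_re]
      linarith
    exact h1.clog h2
  have hII : IntervalIntegrable (fun t => -Complex.log (1 - z t)) volume 0 ω :=
    hcont.intervalIntegrable 0 ω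
  have hre := ContinuousLinearMap.intervalIntegral_comp_comm Complex.reCLM hII
  have him : (dilog (x:ℂ)).im = 0 := dilog_ofReal_im (by rw [abs_of_nonneg hx0]; exact hx1.le)
  calc (∫ t in (0:ℝ)..ω, -Real.log (‖1 - (x:ℂ) * Complex.exp (2*Complex.I*t)‖))
      = ∫ t in (0:ℝ)..ω, Complex.reCLM (-Complex.log (1 - z t)) := by
        apply intervalIntegral.integral_congr
        intro t _
        simp [Complex.log_re, hz]
    _ = Complex.reCLM (∫ t in (0:ℝ)..ω, -Complex.log (1 - z t)) := hre
    _ = ((dilog w1 - dilog (x:ℂ)) / (2*Complex.I)).re := by rw [hcomplex]; rfl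
    _ = (dilog w1).im / 2 := by
        rw [Complex.div_re]
        simp [Complex.normSq_apply, him]
        ring

/-- Л(ω) = (1/2) Im Li₂(e^{2iω}) for all real ω. -/
theorem stmt16 (ω : ℝ) :
    lob ω = (1 / 2) * (dilog (Complex.exp (2 * Complex.I * ω))).im := by
  -- the approximating sequence
  obtain ⟨X, hX0, hX1, hXlim⟩ : ∃ X : ℕ → ℝ, (∀ n, 1/2 ≤ X n) ∧ (∀ n, X n < 1) ∧
      Tendsto X atTop (𝓝 1) := by
    refine ⟨fun n => 1 - 1 / (n + 2), fun n => ?_, fun n => ?_, ?_⟩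
    · have h1 : (1 : ℝ) / (n + 2) ≤ 1/2 := by
        apply one_div_le_one_div_of_le (by norm_num)
        linarith [Nat.cast_nonneg (α := ℝ) n]
      linarith
    · have h1 : (0:ℝ) < 1 / (n + 2) := by positivity
      linarith
    · have h2 : Tendsto (fun n : ℕ => (1:ℝ) / ((n:ℝ) + 2)) atTop (𝓝 0) := by
        have h := (tendsto_one_div_add_atTop_nhds_zero_nat (𝕜 := ℝ)).comp (tendsto_add_atTop_nat 1)
        refine h.congr fun n => ?_
        simp only [Function.comp_apply]
        push_cast
        ring
      have h3 : Tendsto (fun n : ℕ => 1 - (1:ℝ) / ((n:ℝ) + 2)) atTop (𝓝 (1 - 0)) :=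
        tendsto_const_nhds.sub h2
      simpa using h3
  -- LHS tendsto
  have hLHS : Tendsto (fun n => ∫ t in (0:ℝ)..ω,
      -Real.log (‖1 - (X n : ℂ) * Complex.exp (2*Complex.I*t)‖)) atTop
      (𝓝 (∫ t in (0:ℝ)..ω, -Real.log (‖1 - Complex.exp (2*Complex.I*t)‖))) := by
    apply intervalIntegral.tendsto_integral_filter_of_dominated_convergence
      (bound := fun t => Real.log 2 - Real.log |Real.sin t|)
    · -- measurability
      apply Eventually.of_forall
      intro n
      apply Continuous.aestronglyMeasurable
      apply Continuous.neg
      rw [continuous_iff_continuousAt]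
      intro t
      have hzc : ContinuousAt (fun s : ℝ =>
          ‖1 - (X n : ℂ) * Complex.exp (2*Complex.I*s)‖) t := by
        apply Continuous.continuousAt
        exact continuous_norm.comp (continuous_const.sub (continuous_const.mul
          (Complex.continuous_exp.comp (continuous_const.mul Complex.continuous_ofReal))))
      apply ContinuousAt.log hzc
      have hsub := norm_sub_norm_le (1 : ℂ) ((X n : ℂ) * Complex.exp (2*Complex.I*t))
      rw [norm_one, abs_z (X n) t (by linarith [hX0 n])] at hsub
      have h2 := hX1 n
      exact ne_of_gt (by linarith)
    · -- bound
      apply Eventually.of_forall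
      intro n
      filter_upwards [sin_ne_zero_ae] with t hst _
      have hs0 : 0 < |Real.sin t| := abs_pos.mpr hst
      have hup := abs_one_sub_mul_exp_le (X n) t (by linarith [hX0 n]) (hX1 n).le
      have hlo := abs_sin_le_abs_one_sub_mul_exp t (hX0 n) (hX1 n).le
      have hpos : 0 < ‖1 - (X n : ℂ) * Complex.exp (2*Complex.I*t)‖ :=
        lt_of_lt_of_le hs0 hlo
      have hl1 : Real.log (‖1 - (X n : ℂ) * Complex.exp (2*Complex.I*t)‖) ≤
          Real.log 2 := Real.log_le_log hpos hup
      have hl2 : Real.log |Real.sin t| ≤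
          Real.log (‖1 - (X n : ℂ) * Complex.exp (2*Complex.I*t)‖) :=
        Real.log_le_log hs0 hlo
      have hsin1 : Real.log |Real.sin t| ≤ 0 :=
        Real.log_nonpos (abs_nonneg _)
          (abs_le.mpr ⟨Real.neg_one_le_sin t, Real.sin_le_one t⟩)
      have hlog2 : (0:ℝ) ≤ Real.log 2 := Real.log_nonneg one_le_two
      rw [norm_neg, Real.norm_eq_abs, abs_le]
      constructor <;> linarith
    · exact intervalIntegrable_const.sub (intervalIntegrable_log_abs_sin 0 ω)
    · -- pointwise limit
      filter_upwards [sin_ne_zero_ae] with t hst _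
      have hne : (‖1 - Complex.exp (2*Complex.I*t)‖) ≠ 0 := by
        rw [abs_one_sub_exp]
        have : 0 < |Real.sin t| := abs_pos.mpr hst
        positivity
      have hcont : ContinuousAt (fun u : ℝ =>
          -Real.log (‖1 - (u : ℂ) * Complex.exp (2*Complex.I*t)‖)) 1 := by
        apply ContinuousAt.neg
        apply ContinuousAt.log
        · apply Continuous.continuousAt
          exact continuous_norm.comp (continuous_const.sub
            ((Complex.continuous_ofReal.mul continuous_const)))
        · show ‖1 - ((1:ℝ):ℂ) * Complex.exp (2*Complex.I*(t:ℂ))‖ ≠ 0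
          rwa [Complex.ofReal_one, one_mul]
      have := hcont.tendsto.comp hXlim
      simpa [Function.comp_def] using this
  -- RHS tendsto
  have hRHS : Tendsto (fun n => (dilog ((X n : ℂ) * Complex.exp (2*Complex.I*ω))).im / 2) atTop
      (𝓝 ((dilog (Complex.exp (2*Complex.I*ω))).im / 2)) := by
    have habsx : ∀ n, ‖(X n : ℂ)‖ ≤ 1 := by
      intro n
      rw [Complex.norm_real, Real.norm_eq_abs, abs_of_nonneg (by linarith [hX0 n])]
      exact (hX1 n).le
    have habse : ‖Complex.exp (2*Complex.I*(ω:ℂ))‖ = 1 := by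
      rw [Complex.norm_exp]
      have : (2 * Complex.I * (ω : ℂ)).re = 0 := by simp
      rw [this, Real.exp_zero]
    have hdilog : Tendsto (fun n => dilog ((X n : ℂ) * Complex.exp (2*Complex.I*ω))) atTop
        (𝓝 (dilog (Complex.exp (2*Complex.I*ω)))) := by
      rw [show dilog (Complex.exp (2*Complex.I*(ω:ℂ))) =
        ∑' r : ℕ, (Complex.exp (2*Complex.I*(ω:ℂ))) ^ (r+1) / ((r:ℂ)+1)^2 from rfl]
      have : ∀ n, dilog ((X n : ℂ) * Complex.exp (2*Complex.I*ω)) =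
          ∑' r : ℕ, ((X n : ℂ) * Complex.exp (2*Complex.I*(ω:ℂ))) ^ (r+1) / ((r:ℂ)+1)^2 := fun n => rfl
      simp only [this]
      apply tendsto_tsum_of_dominated_convergence (bound := fun r : ℕ => 1 / ((r:ℝ)+1)^2)
      · -- summable bound
        have h : Summable (fun n : ℕ => 1 / (n : ℝ) ^ 2) := by
          simpa using Real.summable_one_div_nat_pow.mpr one_lt_two
        have := (summable_nat_add_iff (f := fun n : ℕ => 1 / (n : ℝ) ^ 2) 1).mpr h
        refine this.congr fun r => ?_
        push_cast; ring
      · -- pointwise convergence of terms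
        intro r
        have hc : ContinuousAt (fun u : ℝ =>
            ((u : ℂ) * Complex.exp (2*Complex.I*(ω:ℂ))) ^ (r+1) / ((r:ℂ)+1)^2) 1 := by
          apply ContinuousAt.div_const
          apply ContinuousAt.pow
          exact (Complex.continuous_ofReal.continuousAt).mul continuousAt_const
        have := hc.tendsto.comp hXlim
        simpa [Function.comp_def] using this
      · -- bound
        apply Eventually.of_forall
        intro n r
        rw [norm_div, norm_pow, norm_pow]
        have h1 : ‖(r : ℂ) + 1‖ = (r : ℝ) + 1 := by
          rw [show (r : ℂ) + 1 = ((r + 1 : ℕ) : ℂ) by push_cast; ring, Complex.norm_natCast]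
          push_cast; ring
        rw [h1, norm_mul, habse, mul_one]
        gcongr
        exact pow_le_one₀ (norm_nonneg _) (habsx n)
    exact (Tendsto.comp (Complex.continuous_im.tendsto _) hdilog).div_const 2
  -- combine
  have hEq : ∀ n, (∫ t in (0:ℝ)..ω,
      -Real.log (‖1 - (X n : ℂ) * Complex.exp (2*Complex.I*t)‖)) =
      (dilog ((X n : ℂ) * Complex.exp (2*Complex.I*ω))).im / 2 :=
    fun n => key_identity ω (by linarith [hX0 n]) (hX1 n)
  simp only [hEq] at hLHS
  have hfinal := tendsto_nhds_unique hLHS hRHS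
  -- identify LHS integral with lob
  have hlob : (∫ t in (0:ℝ)..ω, -Real.log (‖1 - Complex.exp (2*Complex.I*t)‖)) =
      lob ω := by
    rw [lob, ← intervalIntegral.integral_neg]
    apply intervalIntegral.integral_congr
    intro t _
    show -Real.log (‖1 - Complex.exp (2*Complex.I*(t:ℂ))‖) = -Real.log |2*Real.sin t|
    rw [abs_one_sub_exp, abs_mul]
    norm_num
  rw [hlob] at hfinal
  rw [hfinal]
  ring
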